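/- Let N ≥ 1, let x_1, …, x_{N+1} ∈ ℝ^N be affinely independent, and let y lie in the open convex hull co{x_1,…,x_{N+1}}. If ξ = (ξ_1,…,ξ_{N+1}) ∈ ℝ^{N+1} satisfies Σ_{i=1}^{N+1} ξ_i (x_i − y) = 0 and ξ ≠ 0, then either ξ_i > 0 for every i or ξ_i < 0 for every i. -/

import Mathlib

open Finset

/-- Sign lemma from the proof of Theorem 3: if `y` lies in the open convex hull
(interior of the convex hull) of `N + 1` affinely independent sensors in `ℝ^N` and
`ξ ≠ 0` satisfies `∑ i, ξ i • (x i - y) = 0`, then the `ξ i` are either all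
strictly positive or all strictly negative. -/
theorem nullvector_sign_lemma {N : ℕ} (hN : 1 ≤ N)
    (x : Fin (N + 1) → EuclideanSpace ℝ (Fin N))
    (hx : AffineIndependent ℝ x)
    (y : EuclideanSpace ℝ (Fin N))
    (hy : y ∈ interior (convexHull ℝ (Set.range x)))
    (ξ : Fin (N + 1) → ℝ)
    (hker : ∑ i, ξ i • (x i - y) = 0) (hξ : ξ ≠ 0) :
    (∀ i, 0 < ξ i) ∨ (∀ i, ξ i < 0) := by
  have htop : affineSpan ℝ (Set.range x) = ⊤ := by
    rw [hx.affineSpan_eq_top_iff_card_eq_finrank_add_one]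
    simp
  let b : AffineBasis (Fin (N + 1)) ℝ (EuclideanSpace ℝ (Fin N)) := ⟨x, hx, htop⟩
  have hrange : Set.range ⇑b = Set.range x := rfl
  rw [← hrange, b.interior_convexHull] at hy
  set β : Fin (N + 1) → ℝ := fun i => b.coord i y with hβ
  have hβpos : ∀ i, 0 < β i := hy
  have hβsum : ∑ i, β i = 1 := b.sum_coord_apply_eq_one y
  have hβcomb : ∑ i, β i • x i = y := b.linear_combination_coord_eq_self y
  set s : ℝ := ∑ i, ξ i with hs
  -- ∑ (ξ i - s * β i) • x i = 0 with weights summing to 0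
  have hw0 : ∑ i, (ξ i - s * β i) = 0 := by
    rw [Finset.sum_sub_distrib, ← Finset.mul_sum, hβsum, mul_one, sub_self]
  have hwx : ∑ i, (ξ i - s * β i) • x i = 0 := by
    have h1 : ∑ i, ξ i • (x i - y) = (∑ i, ξ i • x i) - s • y := by
      simp [smul_sub, Finset.sum_sub_distrib, ← Finset.sum_smul]; rfl
    have h2 : ∑ i, ξ i • x i = s • y := by
      have := hker; rw [h1] at this; exact sub_eq_zero.mp this
    calc ∑ i, (ξ i - s * β i) • x i
        = (∑ i, ξ i • x i) - s • (∑ i, β i • x i) := by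
          simp [sub_smul, Finset.sum_sub_distrib, Finset.smul_sum, mul_smul]
      _ = 0 := by rw [h2, hβcomb, sub_self]
  have hzero : ∀ i, ξ i - s * β i = 0 := fun i =>
    affineIndependent_iff.mp hx Finset.univ _ hw0 hwx i (Finset.mem_univ i)
  have hξeq : ∀ i, ξ i = s * β i := fun i => by linarith [hzero i]
  have hsne : s ≠ 0 := by
    intro h
    apply hξ
    funext i
    simp [hξeq i, h]
  rcases hsne.lt_or_gt with h | h
  · right; intro i; rw [hξeq i]; exact mul_neg_of_neg_of_pos h (hβpos i)
  · left; intro i; rw [hξeq i]; exact mul_pos h (hβpos i)
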